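/- Let P and S be strings of equal length m, and let i ≥ 1. Then the set M_i = { k ∈ [2^{i−1}, 2^i − 1] : k is a match } is a finite arithmetic progression: there exist natural numbers a, d, t such that M_i = { a − d·x : 0 ≤ x < t }. -/
import Mathlib

private def IsMatch {Alph : Type*} (P S : ℕ → Alph) (m k : ℕ) : Prop :=
  k ≤ m ∧ ∀ u < k, P (1 + u) = S (m - k + 1 + u)

private def IsPeriod {Alph : Type*} (P : ℕ → Alph) (a p : ℕ) : Prop :=
  ∀ u, u + p < a → P (1 + u) = P (1 + u + p)

private lemma period_sub {Alph : Type*} (P : ℕ → Alph) {a p q : ℕ}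
    (hpq : p ≤ q) (hqa : p + q ≤ a) (hp : IsPeriod P a p) (hq : IsPeriod P a q) :
    IsPeriod P a (q - p) := by
  intro u hu
  rcases lt_or_ge (u + q) a with h | h
  · have h1 := hq u h
    have h2 := hp (u + q - p) (by omega)
    rw [show 1 + (u + q - p) + p = 1 + u + q by omega] at h2
    rw [h1, show 1 + u + (q - p) = 1 + (u + q - p) by omega]
    exact h2.symm
  · have hup : p ≤ u := by omega
    have h1 := hp (u - p) (by omega)
    have h2 := hq (u - p) (by omega)
    rw [show 1 + (u - p) + p = 1 + u by omega] at h1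
    rw [show 1 + (u - p) + q = 1 + u + (q - p) by omega] at h2
    rw [← h1, h2]

private lemma period_gcd {Alph : Type*} (P : ℕ → Alph) :
    ∀ n p q a, p + q = n → p + q ≤ a → IsPeriod P a p → IsPeriod P a q →
      IsPeriod P a (Nat.gcd p q) := by
  intro n
  induction n using Nat.strong_induction_on with
  | _ n ih =>
    intro p q a hn hsum hp hq
    rcases Nat.eq_zero_or_pos p with hp0 | hp0
    · subst hp0; simpa using hq
    rcases Nat.eq_zero_or_pos q with hq0 | hq0
    · subst hq0; simpa using hp
    rcases le_total p q with h | h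
    · have := ih (p + (q - p)) (by omega) p (q - p) a rfl (by omega) hp
        (period_sub P h (by omega) hp hq)
      rwa [Nat.gcd_sub_self_right h] at this
    · have := ih ((p - q) + q) (by omega) (p - q) q a rfl (by omega)
        (period_sub P h (by omega) hq hp) hq
      rwa [Nat.gcd_sub_self_left h] at this

private lemma period_mul {Alph : Type*} (P : ℕ → Alph) {a d : ℕ}
    (hd : IsPeriod P a d) : ∀ j, IsPeriod P a (j * d) := by
  intro j
  induction j with
  | zero => intro u hu; simp
  | succ j ih =>
    intro u hu
    rw [Nat.succ_mul] at hu ⊢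
    have h1 := hd u (by omega)
    have h2 := ih (u + d) (by omega)
    rw [show (1:ℕ) + (u + d) = 1 + u + d by ring,
        show (1:ℕ) + u + d + j * d = 1 + u + (j * d + d) by ring] at h2
    exact h1.trans h2

private lemma match_of_period {Alph : Type*} {P S : ℕ → Alph} {m a c : ℕ}
    (ha : IsMatch P S m a) (hc : IsPeriod P a c) (hca : c ≤ a) :
    IsMatch P S m (a - c) := by
  obtain ⟨ham, ha⟩ := ha
  refine ⟨by omega, fun u hu => ?_⟩
  have h1 := hc u (by omega)
  have h2 := ha (u + c) (by omega)
  rw [show 1 + (u + c) = 1 + u + c by ring] at h2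
  rw [h1, h2, show m - a + 1 + (u + c) = m - (a - c) + 1 + u by omega]

private lemma period_of_matches {Alph : Type*} {P S : ℕ → Alph} {m a k : ℕ}
    (ha : IsMatch P S m a) (hk : IsMatch P S m k) (hka : k ≤ a) :
    IsPeriod P a (a - k) := by
  obtain ⟨ham, ha'⟩ := ha
  obtain ⟨hkm, hk'⟩ := hk
  intro u hu
  have h1 := hk' u (by omega)
  have h2 := ha' (u + (a - k)) (by omega)
  rw [show 1 + (u + (a - k)) = 1 + u + (a - k) by ring,
      show m - a + 1 + (u + (a - k)) = m - k + 1 + u by omega] at h2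
  exact h1.trans h2.symm


/-- **Matches within a dyadic segment form an arithmetic progression.**
`P` and `S` are strings of length `m`, modeled as functions `ℕ → Alph` on
1-indexed positions.  An integer `k ∈ [0,m]` is a *match* if
`P[1,k] = S[m−k+1, m]`, i.e. `∀ u < k, P (1+u) = S (m−k+1+u)`.
For every `i ≥ 1`, the set of matches in the segment `[2^{i−1}, 2^i − 1]`
equals `{ a − d·x : 0 ≤ x < t }` for some naturals `a`, `d`, `t`. -/
theorem matches_in_segment_are_progression {Alph : Type*} (P S : ℕ → Alph)
    (m i : ℕ) (hi : 1 ≤ i) :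
    ∃ a d t : ℕ, ∀ k : ℕ,
      (2 ^ (i - 1) ≤ k ∧ k ≤ 2 ^ i - 1 ∧ k ≤ m ∧
        (∀ u < k, P (1 + u) = S (m - k + 1 + u)))
      ↔ (∃ x : ℕ, x < t ∧ k = a - d * x) := by
  classical
  set L := 2 ^ (i - 1) with hLdef
  have hL1 : 1 ≤ L := Nat.one_le_two_pow
  have h2i : 2 ^ i = 2 * L := by
    rw [hLdef, ← pow_succ']
    congr 1
    omega
  have key : ∀ k, (2 ^ (i - 1) ≤ k ∧ k ≤ 2 ^ i - 1 ∧ k ≤ m ∧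
      (∀ u < k, P (1 + u) = S (m - k + 1 + u)))
      ↔ (L ≤ k ∧ k < 2 * L ∧ IsMatch P S m k) := by
    intro k
    rw [h2i]
    constructor
    · rintro ⟨h1, h2, h3, h4⟩
      exact ⟨h1, by omega, h3, h4⟩
    · rintro ⟨h1, h2, h3, h4⟩
      exact ⟨h1, by omega, h3, h4⟩
  set A : Finset ℕ :=
    (Finset.range (2 * L)).filter (fun k => L ≤ k ∧ IsMatch P S m k) with hAdef
  have memA : ∀ k, k ∈ A ↔ (L ≤ k ∧ k < 2 * L ∧ IsMatch P S m k) := by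
    intro k
    simp only [hAdef, Finset.mem_filter, Finset.mem_range]
    tauto
  by_cases hA : A.Nonempty
  · set a := A.max' hA with hadef
    have haA : a ∈ A := A.max'_mem hA
    obtain ⟨haL, ha2L, haM⟩ := (memA a).1 haA
    by_cases hB : (A.erase a).Nonempty
    · -- at least two matches
      set b := (A.erase a).max' hB with hbdef
      have hbB : b ∈ A.erase a := (A.erase a).max'_mem hB
      have hbA : b ∈ A := Finset.mem_of_mem_erase hbB
      have hbne : b ≠ a := Finset.ne_of_mem_erase hbB
      obtain ⟨hbL, hb2L, hbM⟩ := (memA b).1 hbA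
      have hba : b < a := lt_of_le_of_ne (A.le_max' b hbA) hbne
      set d := a - b with hddef
      have hd0 : 0 < d := by omega
      have hdP : IsPeriod P a d := period_of_matches haM hbM (le_of_lt hba)
      refine ⟨a, d, (a - L) / d + 1, fun k => ?_⟩
      rw [key]
      constructor
      · rintro ⟨hkL, hk2L, hkM⟩
        have hkA : k ∈ A := (memA k).2 ⟨hkL, hk2L, hkM⟩
        have hka : k ≤ a := A.le_max' k hkA
        rcases eq_or_lt_of_le hka with rfl | hklt
        · exact ⟨0, Nat.succ_pos _, by simp⟩
        · set p := a - k with hpdef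
          have hp0 : 0 < p := by omega
          have hpP : IsPeriod P a p := period_of_matches haM hkM (le_of_lt hklt)
          set g := Nat.gcd p d with hgdef
          have hgP : IsPeriod P a g :=
            period_gcd P (p + d) p d a rfl (by omega) hpP hdP
          have hg0 : 0 < g := Nat.gcd_pos_of_pos_left d hp0
          have hgd : g ≤ d := Nat.le_of_dvd hd0 (Nat.gcd_dvd_right p d)
          have hgM : IsMatch P S m (a - g) := match_of_period haM hgP (by omega)
          have hgA : a - g ∈ A := (memA (a - g)).2 ⟨by omega, by omega, hgM⟩
          have hgE : a - g ∈ A.erase a := Finset.mem_erase.2 ⟨by omega, hgA⟩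
          have hgb : a - g ≤ b := (A.erase a).le_max' _ hgE
          have hgeq : g = d := by omega
          have hdvd : d ∣ p := hgeq ▸ Nat.gcd_dvd_left p d
          refine ⟨p / d, ?_, ?_⟩
          · have h := Nat.div_le_div_right (c := d) (show p ≤ a - L by omega)
            exact Nat.lt_add_one_iff.mpr h
          · rw [Nat.mul_div_cancel' hdvd]
            omega
      · rintro ⟨x, hx, rfl⟩
        have hxle : x ≤ (a - L) / d := Nat.lt_add_one_iff.mp hx
        have h1 : d * x ≤ d * ((a - L) / d) := Nat.mul_le_mul_left d hxle
        have h2 : d * ((a - L) / d) ≤ a - L := Nat.mul_div_le (a - L) d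
        have hdx : d * x ≤ a - L := le_trans h1 h2
        have hM : IsMatch P S m (a - d * x) := by
          have := period_mul P hdP x
          rw [mul_comm x d] at this
          exact match_of_period haM this (by omega)
        exact ⟨by omega, by omega, hM⟩
    · -- exactly one match: A = {a}
      refine ⟨a, 0, 1, fun k => ?_⟩
      rw [key]
      constructor
      · rintro ⟨hkL, hk2L, hkM⟩
        have hkA : k ∈ A := (memA k).2 ⟨hkL, hk2L, hkM⟩
        have hka : k = a := by
          by_contra hne
          exact hB ⟨k, Finset.mem_erase.2 ⟨hne, hkA⟩⟩
        exact ⟨0, Nat.zero_lt_one, by omega⟩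
      · rintro ⟨x, hx, rfl⟩
        have : x = 0 := by omega
        subst this
        simpa using ⟨haL, ha2L, haM⟩
  · refine ⟨0, 0, 0, fun k => ?_⟩
    rw [key]
    constructor
    · rintro ⟨hkL, hk2L, hkM⟩
      exact absurd ⟨k, (memA k).2 ⟨hkL, hk2L, hkM⟩⟩ hA
    · rintro ⟨x, hx, _⟩
      omega
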